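/- Let P be a row-finite or column-finite matrix over a commutative ring R. Then the infinite Hankel matrix H with entries H_{n,n'} = (P^{n+n'})_{00} factorizes as H = O(P) * O(P^T)^T, where O(Q)_{nk} = (Q^n)_{0k}. Consequently, if P is totally positive of order r over a partially ordered commutative ring, then so is H. -/

import Mathlib

/-- Product of infinite matrices, defined via `finsum` (a genuine finite sum
whenever the left factor is row-finite or the right factor is column-finite). -/
noncomputable def fMul {R : Type*} [CommRing R] (P Q : ℕ → ℕ → R) : ℕ → ℕ → R :=
  fun i k => ∑ᶠ j, P i j * Q j k

/-- Powers of an infinite matrix. -/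
noncomputable def fPow {R : Type*} [CommRing R] (P : ℕ → ℕ → R) : ℕ → ℕ → ℕ → R
  | 0 => fun i j => if i = j then 1 else 0
  | n + 1 => fMul (fPow P n) P

/-- The output matrix of a production matrix `P`: `O(P)_{nk} = (P^n)_{0k}`. -/
noncomputable def outputMat {R : Type*} [CommRing R] (P : ℕ → ℕ → R) : ℕ → ℕ → R :=
  fun n k => fPow P n 0 k

/-- A minor of an infinite matrix: the determinant of the square submatrix with
rows `r 0 < r 1 < ⋯` and columns `c 0 < c 1 < ⋯`. -/
noncomputable def minor {R : Type*} [CommRing R] (A : ℕ → ℕ → R) {k : ℕ}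
    (r c : Fin k → ℕ) : R :=
  (Matrix.of fun i j => A (r i) (c j)).det

/-- `P` is row-finite or column-finite. -/
def RowOrColFinite {R : Type*} [Zero R] (P : ℕ → ℕ → R) : Prop :=
  (∀ i, (Function.support (P i)).Finite) ∨ (∀ j, (Function.support fun i => P i j).Finite)


open Function

section Aux
variable {R : Type*} [CommRing R] {P : ℕ → ℕ → R}


lemma fPow_succ_apply (P : ℕ → ℕ → R) (n i k : ℕ) :
    fPow P (n+1) i k = ∑ᶠ t, fPow P n i t * P t k := rfl

lemma rf_fPow (h : ∀ i, (support (P i)).Finite) (n : ℕ) (i : ℕ) :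
    (support (fPow P n i)).Finite := by
  induction n generalizing i with
  | zero =>
      apply Set.Finite.subset (Set.finite_singleton i)
      intro j hj
      simp only [fPow, mem_support, ne_eq] at hj
      by_contra hne
      simp only [Set.mem_singleton_iff] at hne
      exact hj (if_neg (fun h' => hne h'.symm))
  | succ n ih =>
      apply Set.Finite.subset ((ih i).biUnion (fun t _ => h t))
      intro k hk
      simp only [mem_support, ne_eq] at hk
      rw [fPow_succ_apply] at hk
      by_contra hmem
      apply hk
      apply finsum_eq_zero_of_forall_eq_zero
      intro t
      rcases eq_or_ne (fPow P n i t) 0 with h1 | h1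
      · simp [h1]
      rcases eq_or_ne (P t k) 0 with h2 | h2
      · simp [h2]
      exact absurd (Set.mem_biUnion (by exact h1) h2) hmem

lemma cf_fPow (h : ∀ j, (support fun i => P i j).Finite) (n : ℕ) (j : ℕ) :
    (support fun i => fPow P n i j).Finite := by
  induction n generalizing j with
  | zero =>
      apply Set.Finite.subset (Set.finite_singleton j)
      intro i hi
      simp only [mem_support, ne_eq, fPow] at hi
      by_contra hne
      exact hi (if_neg (by simpa using hne))
  | succ n ih =>
      apply Set.Finite.subset ((h j).biUnion (fun t _ => ih t))
      intro i hi
      simp only [mem_support, ne_eq] at hi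
      rw [fPow_succ_apply] at hi
      by_contra hmem
      apply hi
      apply finsum_eq_zero_of_forall_eq_zero
      intro t
      rcases eq_or_ne (P t j) 0 with h2 | h2
      · simp [h2]
      rcases eq_or_ne (fPow P n i t) 0 with h1 | h1
      · simp [h1]
      exact absurd (Set.mem_biUnion (by exact h2) h1) hmem

lemma fPow_one_apply (P : ℕ → ℕ → R) (i k : ℕ) : fPow P 1 i k = P i k := by
  rw [fPow_succ_apply]
  rw [finsum_eq_single _ i (fun t ht => by simp [fPow, Ne.symm ht])]
  simp [fPow]

/-- swap lemma, row-finite flavour -/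
lemma finsum_swap_rf (A : ℕ → R) (B : ℕ → ℕ → R) (C : ℕ → R)
    (hA : (support A).Finite) (hB : ∀ u, (support (B u)).Finite) :
    ∑ᶠ t, (∑ᶠ u, A u * B u t) * C t = ∑ᶠ u, A u * ∑ᶠ t, B u t * C t := by
  classical
  set Sa := hA.toFinset with hSa
  have hTfin : (⋃ u ∈ (Sa : Set ℕ), support (B u)).Finite :=
    Set.Finite.biUnion (Sa.finite_toSet) (fun u _ => hB u)
  set T := hTfin.toFinset with hT
  have hinner : ∀ t, (∑ᶠ u, A u * B u t) = ∑ u ∈ Sa, A u * B u t := by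
    intro t
    apply finsum_eq_finset_sum_of_support_subset
    intro u hu
    simp only [mem_support, ne_eq] at hu
    have : A u ≠ 0 := fun h => hu (by simp [h])
    simpa [hSa] using this
  have hBT : ∀ u ∈ Sa, ∀ t, B u t ≠ 0 → t ∈ T := by
    intro u hu t ht
    simp only [hT, Set.Finite.mem_toFinset]
    exact Set.mem_biUnion (by simpa using hu) ht
  calc ∑ᶠ t, (∑ᶠ u, A u * B u t) * C t
      = ∑ t ∈ T, (∑ u ∈ Sa, A u * B u t) * C t := by
        rw [finsum_eq_finset_sum_of_support_subset]
        · exact Finset.sum_congr rfl (fun t _ => by rw [hinner])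
        · intro t ht
          simp only [mem_support, ne_eq] at ht
          rw [hinner] at ht
          have : ∃ u ∈ Sa, A u * B u t * C t ≠ 0 := by
            by_contra hc
            push_neg at hc
            exact ht (by rw [Finset.sum_mul]; exact Finset.sum_eq_zero hc)
          obtain ⟨u, hu, hne⟩ := this
          have : B u t ≠ 0 := fun h => hne (by simp [h])
          exact hBT u hu t this
    _ = ∑ u ∈ Sa, A u * ∑ t ∈ T, B u t * C t := by
        simp_rw [Finset.sum_mul]
        rw [Finset.sum_comm]
        apply Finset.sum_congr rfl
        intro u _
        rw [Finset.mul_sum]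
        exact Finset.sum_congr rfl (fun t _ => by ring)
    _ = ∑ᶠ u, A u * ∑ᶠ t, B u t * C t := by
        rw [finsum_eq_finset_sum_of_support_subset]
        · apply Finset.sum_congr rfl
          intro u hu
          congr 1
          rw [finsum_eq_finset_sum_of_support_subset]
          intro t ht
          simp only [mem_support, ne_eq] at ht
          exact hBT u hu t (fun h => ht (by simp [h]))
        · intro u hu
          simp only [mem_support, ne_eq] at hu
          have : A u ≠ 0 := fun h => hu (by simp [h])
          simpa [hSa] using this

/-- swap lemma, column-finite flavour -/
lemma finsum_swap_cf (A : ℕ → R) (B : ℕ → ℕ → R) (C : ℕ → R)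
    (hC : (support C).Finite) (hB : ∀ t, (support fun u => B u t).Finite) :
    ∑ᶠ t, (∑ᶠ u, A u * B u t) * C t = ∑ᶠ u, A u * ∑ᶠ t, B u t * C t := by
  classical
  set T := hC.toFinset with hT
  have hSfin : (⋃ t ∈ (T : Set ℕ), support (fun u => B u t)).Finite :=
    Set.Finite.biUnion (T.finite_toSet) (fun t _ => hB t)
  set Sa := hSfin.toFinset with hSa
  have hBS : ∀ t ∈ T, ∀ u, B u t ≠ 0 → u ∈ Sa := by
    intro t ht u hu
    simp only [hSa, Set.Finite.mem_toFinset]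
    exact Set.mem_biUnion (by simpa using ht) hu
  have hCt : ∀ t, C t ≠ 0 → t ∈ T := by
    intro t ht; simpa [hT] using ht
  calc ∑ᶠ t, (∑ᶠ u, A u * B u t) * C t
      = ∑ t ∈ T, (∑ u ∈ Sa, A u * B u t) * C t := by
        rw [finsum_eq_finset_sum_of_support_subset]
        · apply Finset.sum_congr rfl
          intro t ht
          congr 1
          apply finsum_eq_finset_sum_of_support_subset
          intro u hu
          simp only [mem_support, ne_eq] at hu
          exact hBS t ht u (fun h => hu (by simp [h]))
        · intro t ht
          simp only [mem_support, ne_eq] at ht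
          exact hCt t (fun h => ht (by simp [h]))
    _ = ∑ u ∈ Sa, A u * ∑ t ∈ T, B u t * C t := by
        simp_rw [Finset.sum_mul]
        rw [Finset.sum_comm]
        apply Finset.sum_congr rfl
        intro u _
        rw [Finset.mul_sum]
        exact Finset.sum_congr rfl (fun t _ => by ring)
    _ = ∑ᶠ u, A u * ∑ᶠ t, B u t * C t := by
        rw [finsum_eq_finset_sum_of_support_subset]
        · apply Finset.sum_congr rfl
          intro u _
          congr 1
          rw [finsum_eq_finset_sum_of_support_subset]
          intro t ht
          simp only [mem_support, ne_eq] at ht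
          exact hCt t (fun h => ht (by simp [h]))
        · intro u hu
          simp only [mem_support, ne_eq] at hu
          have : ∃ t, B u t * C t ≠ 0 := by
            by_contra hc
            push_neg at hc
            exact hu (by simp [finsum_eq_zero_of_forall_eq_zero hc])
          obtain ⟨t, ht⟩ := this
          exact hBS t (hCt t (fun h => ht (by simp [h]))) u (fun h => ht (by simp [h]))

lemma fPow_add (hP : RowOrColFinite P) (a b i j : ℕ) :
    fPow P (a + b) i j = ∑ᶠ t, fPow P a i t * fPow P b t j := by
  induction b generalizing j with
  | zero =>
      rw [finsum_eq_single _ j (fun t ht => by simp [fPow, ht])]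
      simp [fPow]
  | succ b ih =>
      have key : ∑ᶠ t, (∑ᶠ u, fPow P a i u * fPow P b u t) * P t j
          = ∑ᶠ u, fPow P a i u * ∑ᶠ t, fPow P b u t * P t j := by
        rcases hP with h | h
        · exact finsum_swap_rf _ _ _ (rf_fPow h a i) (fun u => rf_fPow h b u)
        · exact finsum_swap_cf _ _ _ (h j) (fun t => cf_fPow h b t)
      calc fPow P (a + (b+1)) i j = ∑ᶠ t, fPow P (a+b) i t * P t j := rfl
        _ = ∑ᶠ t, (∑ᶠ u, fPow P a i u * fPow P b u t) * P t j := by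
            exact finsum_congr (fun t => by rw [ih])
        _ = ∑ᶠ u, fPow P a i u * ∑ᶠ t, fPow P b u t * P t j := key
        _ = ∑ᶠ u, fPow P a i u * fPow P (b+1) u j := rfl

lemma fPow_transpose (hP : RowOrColFinite P) (n i j : ℕ) :
    fPow (fun x y => P y x) n i j = fPow P n j i := by
  induction n generalizing i j with
  | zero => simp only [fPow]; exact if_congr eq_comm rfl rfl
  | succ n ih =>
      calc fPow (fun x y => P y x) (n+1) i j
          = ∑ᶠ t, fPow (fun x y => P y x) n i t * P j t := rfl
        _ = ∑ᶠ t, P j t * fPow P n t i := finsum_congr (fun t => by rw [ih]; ring)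
        _ = ∑ᶠ t, fPow P 1 j t * fPow P n t i :=
            finsum_congr (fun t => by rw [fPow_one_apply])
        _ = fPow P (1 + n) j i := (fPow_add hP 1 n j i).symm
        _ = fPow P (n+1) j i := by rw [Nat.add_comm]

variable {k : ℕ}


open Classical in
/-- Cauchy–Binet over a finite inner index set `T ⊆ ℕ`. -/
lemma cauchy_binet (A : Fin k → ℕ → R) (B : ℕ → Fin k → R) (T : Finset ℕ) :
    (Matrix.of fun i j => ∑ t ∈ T, A i t * B t j).det
      = ∑ s ∈ (Fintype.piFinset fun _ : Fin k => T).filter StrictMono,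
          (Matrix.of fun i j => A i (s j)).det * (Matrix.of fun i j => B (s i) j).det := by
  classical
  -- Step 1: expand by multilinearity
  have h1 : (Matrix.of fun i j => ∑ t ∈ T, A i t * B t j).det
      = ∑ r ∈ Fintype.piFinset (fun _ : Fin k => T),
          (∏ i, A i (r i)) * (Matrix.of fun i j => B (r i) j).det := by
    have : (Matrix.of fun i j => ∑ t ∈ T, A i t * B t j)
        = fun i => ∑ t ∈ T, A i t • (fun j => B t j) := by
      funext i j
      simp [Finset.sum_apply, smul_eq_mul]
    rw [show (Matrix.of fun i j => ∑ t ∈ T, A i t * B t j).det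
        = Matrix.detRowAlternating (Matrix.of fun i j => ∑ t ∈ T, A i t * B t j) from rfl]
    rw [show (Matrix.of fun i j => ∑ t ∈ T, A i t * B t j)
        = (fun i => ∑ t ∈ T, A i t • (fun j => B t j)) from this]
    have hms := (Matrix.detRowAlternating (R := R) (n := Fin k)).toMultilinearMap.map_sum_finset
      (fun i t => A i t • (fun j => B t j)) (fun _ => T)
    simp only [AlternatingMap.coe_multilinearMap] at hms
    rw [hms]
    apply Finset.sum_congr rfl
    intro r _
    have hsm := (Matrix.detRowAlternating (R := R) (n := Fin k)).toMultilinearMap.map_smul_univ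
      (fun i => A i (r i)) (fun i => (fun j => B (r i) j))
    simp only [AlternatingMap.coe_multilinearMap] at hsm
    rw [hsm, smul_eq_mul]
    rfl
  rw [h1]
  -- Step 2: non-injective terms vanish
  rw [← Finset.sum_filter_of_ne (p := Function.Injective)
    (f := fun r => (∏ i, A i (r i)) * (Matrix.of fun i j => B (r i) j).det)
    (fun r _ hne => by
      by_contra hinj
      apply hne
      obtain ⟨i1, i2, heq, hne12⟩ : ∃ i1 i2, r i1 = r i2 ∧ i1 ≠ i2 := by
        simpa [Function.Injective] using hinj
      show (∏ i, A i (r i)) * (Matrix.of fun i j => B (r i) j).det = 0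
      rw [Matrix.det_zero_of_row_eq hne12 (by funext j; simp [heq]), mul_zero])]
  -- Step 3: group by image
  have h3 : ∑ r ∈ (Fintype.piFinset fun _ : Fin k => T).filter Function.Injective,
        (∏ i, A i (r i)) * (Matrix.of fun i j => B (r i) j).det
      = ∑ p ∈ ((Fintype.piFinset fun _ : Fin k => T).filter StrictMono) ×ˢ
            (Finset.univ : Finset (Equiv.Perm (Fin k))),
          (∏ i, A i (p.1 (p.2 i))) * (Matrix.of fun i j => B (p.1 (p.2 i)) j).det := by
    refine Eq.symm (Finset.sum_bij
      (i := fun (p : (Fin k → ℕ) × Equiv.Perm (Fin k)) _ => p.1 ∘ p.2) ?_ ?_ ?_ ?_)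
    · rintro ⟨s, σ⟩ hp
      simp only [Finset.mem_product, Finset.mem_filter, Fintype.mem_piFinset] at hp
      obtain ⟨⟨hmem, hmono⟩, -⟩ := hp
      simp only [Finset.mem_filter, Fintype.mem_piFinset]
      exact ⟨fun i => hmem _, hmono.injective.comp σ.injective⟩
    · rintro ⟨s1, σ1⟩ hp1 ⟨s2, σ2⟩ hp2 heq
      dsimp only at heq
      simp only [Finset.mem_product, Finset.mem_filter, Fintype.mem_piFinset] at hp1 hp2
      have hmono1 := hp1.1.2
      have hmono2 := hp2.1.2
      have hrange : Set.range s1 = Set.range s2 := by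
        have e1 : Set.range (s1 ∘ σ1) = Set.range s1 := by
          rw [Set.range_comp, σ1.surjective.range_eq, Set.image_univ]
        have e2 : Set.range (s2 ∘ σ2) = Set.range s2 := by
          rw [Set.range_comp, σ2.surjective.range_eq, Set.image_univ]
        rw [← e1, ← e2, heq]
      haveI : WellFoundedLT (Fin k) := inferInstance
      have hs : s1 = s2 := by exact (hmono1.range_inj hmono2).mp hrange
      subst hs
      have hσ : σ1 = σ2 := Equiv.ext (fun i => hmono1.injective (congrFun heq i))
      simp [hσ]
    · intro r hr
      simp only [Finset.mem_filter, Fintype.mem_piFinset] at hr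
      obtain ⟨hmem, hinj⟩ := hr
      set U : Finset ℕ := Finset.univ.image r with hUdef
      have hU : U.card = k := by
        rw [hUdef, Finset.card_image_of_injective _ hinj, Finset.card_univ, Fintype.card_fin]
      set e : Fin k ≃o {x // x ∈ U} := U.orderIsoOfFin hU with he
      have hbij : Function.Bijective (fun i => (⟨r i, by
          simp [hUdef]⟩ : {x // x ∈ U})) := by
        rw [Fintype.bijective_iff_injective_and_card]
        constructor
        · intro a b hab
          exact hinj (congrArg Subtype.val hab)
        · simp [Fintype.card_coe, hU]
      set r' : Fin k ≃ {x // x ∈ U} := Equiv.ofBijective _ hbij with hr'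
      refine ⟨⟨fun i => (e i : ℕ), r'.trans e.symm.toEquiv⟩, ?_, ?_⟩
      · simp only [Finset.mem_product, Finset.mem_filter, Fintype.mem_piFinset,
          Finset.mem_univ, and_true]
        constructor
        · intro i
          have h2 : (e i : ℕ) ∈ Finset.univ.image r := (e i).2
          simp only [Finset.mem_image, Finset.mem_univ, true_and] at h2
          obtain ⟨x, hx⟩ := h2
          rw [← hx]; exact hmem x
        · intro a b hab
          exact Subtype.coe_lt_coe.mpr (e.strictMono hab)
      · funext i
        simp only [Function.comp]
        show (e (e.symm (r' i)) : ℕ) = r i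
        rw [OrderIso.apply_symm_apply]
        rfl
    · rintro ⟨s, σ⟩ hp
      rfl
  rw [h3, Finset.sum_product]
  apply Finset.sum_congr rfl
  intro s hs
  -- Step 4: sum over permutations gives the product of the two minors
  have hperm : ∀ σ : Equiv.Perm (Fin k),
      (Matrix.of fun i j => B (s (σ i)) j).det
        = (Equiv.Perm.sign σ : ℤ) * (Matrix.of fun i j => B (s i) j).det := by
    intro σ
    have := Matrix.det_permute σ (Matrix.of fun i j => B (s i) j)
    rw [show ((Matrix.of fun i j => B (s i) j).submatrix σ id)
        = (Matrix.of fun i j => B (s (σ i)) j) from rfl] at this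
    exact_mod_cast this
  calc ∑ σ : Equiv.Perm (Fin k),
        (∏ i, A i (s (σ i))) * (Matrix.of fun i j => B (s (σ i)) j).det
      = (∑ σ : Equiv.Perm (Fin k), Equiv.Perm.sign σ • ∏ i, A i (s (σ i)))
          * (Matrix.of fun i j => B (s i) j).det := by
        rw [Finset.sum_mul]
        apply Finset.sum_congr rfl
        intro σ _
        rw [hperm σ, Units.smul_def, zsmul_eq_mul]
        ring
    _ = (Matrix.of fun i j => A i (s j)).det * (Matrix.of fun i j => B (s i) j).det := by
        congr 1
        rw [← Matrix.det_transpose (Matrix.of fun i j => A i (s j)), Matrix.det_apply]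
        rfl

end Aux


open Classical in
lemma output_minor_nonneg {S : Type*} [CommRing S] [PartialOrder S] [IsOrderedRing S]
    (Q : ℕ → ℕ → S) (hQ : RowOrColFinite Q) (ρ : ℕ∞)
    (hTP : ∀ (k : ℕ), (k : ℕ∞) ≤ ρ → ∀ (r c : Fin k → ℕ),
      StrictMono r → StrictMono c → 0 ≤ minor Q r c) :
    ∀ (M k : ℕ), (k : ℕ∞) ≤ ρ → ∀ r c : Fin k → ℕ, StrictMono r → StrictMono c →
      (∑ i, r i) + k ≤ M → 0 ≤ (Matrix.of fun i j => fPow Q (r i) 0 (c j)).det := by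
  intro M
  induction M with
  | zero =>
      intro k hk r c hr hc hM
      obtain rfl : k = 0 := by omega
      rw [Matrix.det_fin_zero]
      exact zero_le_one
  | succ M ih =>
      intro k hk r c hr hc hM
      rcases k with _ | k'
      · rw [Matrix.det_fin_zero]; exact zero_le_one
      by_cases hr0 : r 0 = 0
      · by_cases hc0 : c 0 = 0
        · -- expand along the first row
          rw [Matrix.det_succ_row_zero]
          have hM0 : ∀ j : Fin (k'+1),
              (Matrix.of fun i j => fPow Q (r i) 0 (c j)) 0 j
                = if j = 0 then (1 : S) else 0 := by
            intro j
            show fPow Q (r 0) 0 (c j) = _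
            rw [hr0]
            show (if (0:ℕ) = c j then (1:S) else 0) = _
            by_cases hj : j = 0
            · subst hj; simp [hc0]
            · have h1 : c 0 < c j := hc (by
                refine lt_of_le_of_ne (Fin.zero_le j) (fun h => hj h.symm))
              have : (0:ℕ) ≠ c j := by omega
              simp [hj, this]
          rw [Finset.sum_eq_single 0 (fun j _ hj => by rw [hM0 j, if_neg hj]; ring)
            (fun h => absurd (Finset.mem_univ _) h)]
          rw [hM0 0, if_pos rfl]
          simp only [Fin.val_zero, pow_zero, one_mul, mul_one, Fin.succAbove_zero]
          have hkey := ih k' (le_trans (Nat.cast_le.mpr k'.le_succ) hk)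
            (r ∘ Fin.succ) (c ∘ Fin.succ)
            (hr.comp Fin.strictMono_succ) (hc.comp Fin.strictMono_succ)
            (by
              have hsum := Fin.sum_univ_succ r
              simp only [hr0, zero_add] at hsum
              simp only [Function.comp_apply]
              omega)
          exact hkey
        · -- first row of the minor vanishes
          rw [Matrix.det_eq_zero_of_row_eq_zero 0 (fun j => by
            show fPow Q (r 0) 0 (c j) = 0
            rw [hr0]
            show (if (0:ℕ) = c j then (1:S) else 0) = 0
            have : c 0 ≤ c j := hc.monotone (Fin.zero_le j)
            have : (0:ℕ) ≠ c j := by omega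
            rw [if_neg this])]
      · -- all rows positive: peel one power of Q via Cauchy–Binet
        have hge : ∀ i, 1 ≤ r i := fun i =>
          le_trans (Nat.one_le_iff_ne_zero.mpr hr0) (hr.monotone (Fin.zero_le i))
        set r1 : Fin (k'+1) → ℕ := fun i => r i - 1 with hr1def
        have hr1 : StrictMono r1 := by
          intro a b hab
          have h1 := hr hab
          have h2 := hge a
          simp only [hr1def]
          omega
        obtain ⟨T, hT⟩ : ∃ T : Finset ℕ, ∀ (i j : Fin (k'+1)) (t : ℕ),
            fPow Q (r1 i) 0 t * Q t (c j) ≠ 0 → t ∈ T := by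
          rcases hQ with h | h
          · refine ⟨Finset.biUnion Finset.univ (fun i => (rf_fPow h (r1 i) 0).toFinset),
              fun i j t ht => ?_⟩
            have h1 : fPow Q (r1 i) 0 t ≠ 0 := fun hz => ht (by rw [hz, zero_mul])
            exact Finset.mem_biUnion.mpr ⟨i, Finset.mem_univ i,
              (rf_fPow h (r1 i) 0).mem_toFinset.mpr h1⟩
          · refine ⟨Finset.biUnion Finset.univ (fun j => (h (c j)).toFinset),
              fun i j t ht => ?_⟩
            have h1 : Q t (c j) ≠ 0 := fun hz => ht (by rw [hz, mul_zero])
            exact Finset.mem_biUnion.mpr ⟨j, Finset.mem_univ j,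
              (h (c j)).mem_toFinset.mpr h1⟩
        have hsum : ∀ i j, fPow Q (r i) 0 (c j)
            = ∑ t ∈ T, fPow Q (r1 i) 0 t * Q t (c j) := by
          intro i j
          conv_lhs => rw [show r i = r1 i + 1 from (Nat.sub_add_cancel (hge i)).symm]
          rw [fPow_succ_apply]
          exact finsum_eq_finset_sum_of_support_subset _ (fun t ht => hT i j t ht)
        rw [show (Matrix.of fun i j => fPow Q (r i) 0 (c j))
            = Matrix.of fun i j => ∑ t ∈ T, fPow Q (r1 i) 0 t * Q t (c j) from by
          funext i j
          exact hsum i j]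
        rw [cauchy_binet]
        apply Finset.sum_nonneg
        intro s hsmem
        rw [Finset.mem_filter] at hsmem
        have hsmono := hsmem.2
        apply mul_nonneg
        · apply ih (k'+1) hk r1 s hr1 hsmono
          have he : ∀ i, r1 i + 1 = r i := fun i => Nat.sub_add_cancel (hge i)
          have hsumr : ∑ i, r1 i + (k'+1) = ∑ i, r i := by
            calc ∑ i, r1 i + (k'+1) = ∑ i : Fin (k'+1), (r1 i + 1) := by
                  rw [Finset.sum_add_distrib, Finset.sum_const, Finset.card_univ,
                    Fintype.card_fin, smul_eq_mul, mul_one]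
              _ = ∑ i, r i := Finset.sum_congr rfl (fun i _ => he i)
          omega
        · exact hTP (k'+1) hk s c hsmono hc

/-- (i) For a row-finite or column-finite matrix `P`, the Hankel matrix
`H_{n,n'} = (P^{n+n'})_{00}` factorizes as `H = O(P) ⬝ O(Pᵀ)ᵀ`, i.e.
`(P^{n+n'})_{00} = ∑_k O(P)_{nk} O(Pᵀ)_{n'k}`.
(ii) Consequently, if `Q` is a row-finite or column-finite matrix over a
partially ordered commutative ring that is totally positive of order `ρ`,
then so is the Hankel matrix `((Q^{n+n'})_{00})_{n,n'≥0}`. -/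
theorem hankel_factorization_and_TP {R : Type*} [CommRing R]
    {S : Type*} [CommRing S] [PartialOrder S] [IsOrderedRing S]
    (P : ℕ → ℕ → R) (hP : RowOrColFinite P)
    (Q : ℕ → ℕ → S) (hQ : RowOrColFinite Q) (ρ : ℕ∞)
    (hTP : ∀ (k : ℕ), (k : ℕ∞) ≤ ρ → ∀ (r c : Fin k → ℕ),
      StrictMono r → StrictMono c → 0 ≤ minor Q r c) :
    (∀ n n' : ℕ, fPow P (n + n') 0 0
      = ∑ᶠ k, outputMat P n k * outputMat (fun i j => P j i) n' k)
    ∧ (∀ (k : ℕ), (k : ℕ∞) ≤ ρ → ∀ (r c : Fin k → ℕ),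
        StrictMono r → StrictMono c →
        0 ≤ minor (fun n n' => fPow Q (n + n') 0 0) r c) := by
  classical
  constructor
  · intro n n'
    rw [fPow_add hP n n' 0 0]
    apply finsum_congr
    intro t
    show fPow P n 0 t * fPow P n' t 0
        = fPow P n 0 t * fPow (fun i j => P j i) n' 0 t
    rw [fPow_transpose hP]
  · intro k hk r c hr hc
    have hQt : RowOrColFinite (fun x y => Q y x) := by
      rcases hQ with h | h
      · exact Or.inr h
      · exact Or.inl h
    have hTPt : ∀ (k : ℕ), (k : ℕ∞) ≤ ρ → ∀ (r c : Fin k → ℕ),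
        StrictMono r → StrictMono c → 0 ≤ minor (fun x y => Q y x) r c := by
      intro k hk r c hr hc
      show 0 ≤ (Matrix.of fun i j => Q (c j) (r i)).det
      rw [show (Matrix.of fun i j => Q (c j) (r i))
          = (Matrix.of fun i j => Q (c i) (r j)).transpose from rfl, Matrix.det_transpose]
      exact hTP k hk c r hc hr
    obtain ⟨T, hT⟩ : ∃ T : Finset ℕ, ∀ (i j : Fin k) (t : ℕ),
        fPow Q (r i) 0 t * fPow Q (c j) t 0 ≠ 0 → t ∈ T := by
      rcases hQ with h | h
      · refine ⟨Finset.biUnion Finset.univ (fun i => (rf_fPow h (r i) 0).toFinset),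
          fun i j t ht => ?_⟩
        have h1 : fPow Q (r i) 0 t ≠ 0 := fun hz => ht (by rw [hz, zero_mul])
        exact Finset.mem_biUnion.mpr ⟨i, Finset.mem_univ i,
          (rf_fPow h (r i) 0).mem_toFinset.mpr h1⟩
      · refine ⟨Finset.biUnion Finset.univ (fun j => (cf_fPow h (c j) 0).toFinset),
          fun i j t ht => ?_⟩
        have h1 : fPow Q (c j) t 0 ≠ 0 := fun hz => ht (by rw [hz, mul_zero])
        exact Finset.mem_biUnion.mpr ⟨j, Finset.mem_univ j,
          (cf_fPow h (c j) 0).mem_toFinset.mpr h1⟩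
    have hsum : ∀ (i j : Fin k), fPow Q (r i + c j) 0 0
        = ∑ t ∈ T, fPow Q (r i) 0 t * fPow Q (c j) t 0 := by
      intro i j
      rw [fPow_add hQ]
      exact finsum_eq_finset_sum_of_support_subset _ (fun t ht => hT i j t ht)
    show 0 ≤ (Matrix.of fun i j => fPow Q (r i + c j) 0 0).det
    rw [show (Matrix.of fun i j => fPow Q (r i + c j) 0 0)
        = Matrix.of fun i j => ∑ t ∈ T, fPow Q (r i) 0 t * fPow Q (c j) t 0 from by
      funext i j
      exact hsum i j]
    rw [cauchy_binet (fun i t => fPow Q (r i) 0 t) (fun t j => fPow Q (c j) t 0) T]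
    apply Finset.sum_nonneg
    intro s hs
    rw [Finset.mem_filter] at hs
    apply mul_nonneg
    · exact output_minor_nonneg Q hQ ρ hTP (∑ i, r i + k) k hk r s hr hs.2 le_rfl
    · rw [show (Matrix.of fun i j => fPow Q (c j) (s i) 0)
          = (Matrix.of fun i j => fPow Q (c i) (s j) 0).transpose from rfl, Matrix.det_transpose]
      rw [show (Matrix.of fun i j => fPow Q (c i) (s j) 0)
          = Matrix.of fun i j => fPow (fun x y => Q y x) (c i) 0 (s j) from by
        funext i j
        exact (fPow_transpose hQ (c i) 0 (s j)).symm]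
      exact output_minor_nonneg _ hQt ρ hTPt (∑ i, c i + k) k hk c s hc hs.2 le_rfl
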